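/- Let φ : ℝ → ℝ be Lipschitz with constant K > 0 and 1-periodic, let J = (−1/K, 1/K), and let p, q be coprime integers with q ≥ 1. If for some a₀ ∈ J the fiber {t : Trans(F_{t,a₀}) = p/q} is an interval of positive length (i.e. γ^r_{p/q}(a₀) > γ^l_{p/q}(a₀)), then the Arnol'd tongue T_{p/q} = {(t,a) ∈ ℝ × J : Trans(F_{t,a}) = p/q} has nonempty interior in ℝ². -/

import Mathlib

open Filter Topology Set

/-- `τ` is the translation number of `F`: for every `x`, `(F^[n] x - x)/n → τ`. -/
def IsTransNum (F : ℝ → ℝ) (τ : ℝ) : Prop :=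
  ∀ x : ℝ, Filter.Tendsto (fun n : ℕ => (F^[n] x - x) / n) Filter.atTop (nhds τ)

/-- The map `x ↦ x + t + a·φ x` as a `CircleDeg1Lift`, assuming `|a| * K ≤ 1`. -/
noncomputable def myLift (φ : ℝ → ℝ) (K t a : ℝ)
    (hLip : ∀ x y : ℝ, |φ x - φ y| ≤ K * |x - y|)
    (hper : ∀ x : ℝ, φ (x + 1) = φ x) (ha : |a| * K ≤ 1) : CircleDeg1Lift where
  toFun := fun x => x + t + a * φ x
  monotone' := by
    intro x y hxy
    have h1 : |a * (φ x - φ y)| ≤ |a| * (K * |x - y|) := by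
      rw [abs_mul]
      exact mul_le_mul_of_nonneg_left (hLip x y) (abs_nonneg a)
    have h2 : |x - y| = y - x := by
      rw [abs_sub_comm]; exact abs_of_nonneg (by linarith)
    rw [h2] at h1
    have h3 : a * (φ x - φ y) ≤ |a * (φ x - φ y)| := le_abs_self _
    have h4 : |a| * (K * (y - x)) ≤ 1 * (y - x) := by
      rw [← mul_assoc]
      exact mul_le_mul_of_nonneg_right ha (by linarith)
    simp only
    nlinarith
  map_add_one' := fun x => by simp only [hper]; ring

theorem myLift_transNum (φ : ℝ → ℝ) (K t a : ℝ)
    (hLip : ∀ x y : ℝ, |φ x - φ y| ≤ K * |x - y|)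
    (hper : ∀ x : ℝ, φ (x + 1) = φ x) (ha : |a| * K ≤ 1) {τ' : ℝ}
    (h : IsTransNum (fun x => x + t + a * φ x) τ') :
    (myLift φ K t a hLip hper ha).translationNumber = τ' := by
  apply CircleDeg1Lift.translationNumber_eq_of_tendsto₀
  have := h 0
  simp only [sub_zero] at this
  exact this

theorem stmt_6 (φ : ℝ → ℝ) (K : ℝ) (hK : 0 < K)
    (hLip : ∀ x y : ℝ, |φ x - φ y| ≤ K * |x - y|)
    (hper : ∀ x : ℝ, φ (x + 1) = φ x)
    (τ : ℝ → ℝ → ℝ)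
    (hτ : ∀ t : ℝ, ∀ a ∈ Set.Ioo (-(1 / K)) (1 / K),
      IsTransNum (fun x => x + t + a * φ x) (τ t a))
    (p : ℤ) (q : ℕ) (hq : 1 ≤ q) (hpq : Nat.Coprime p.natAbs q)
    (a₀ : ℝ) (ha₀ : a₀ ∈ Set.Ioo (-(1 / K)) (1 / K))
    (hlen : sInf {t : ℝ | τ t a₀ = (p : ℝ) / (q : ℝ)} <
      sSup {t : ℝ | τ t a₀ = (p : ℝ) / (q : ℝ)}) :
    (interior {ta : ℝ × ℝ | ta.2 ∈ Set.Ioo (-(1 / K)) (1 / K) ∧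
      τ ta.1 ta.2 = (p : ℝ) / (q : ℝ)}).Nonempty := by
  set S := {t : ℝ | τ t a₀ = (p : ℝ) / (q : ℝ)} with hS
  -- a bound on |φ|
  set C : ℝ := |φ 0| + K + 1 with hC
  have hC0 : 0 < C := by positivity
  have hφbdd : ∀ x : ℝ, |φ x| ≤ C := by
    intro x
    have hper' : Function.Periodic φ 1 := hper
    have hfr : φ (Int.fract x) = φ x := by
      have h := hper'.sub_int_mul_eq (x := x) ⌊x⌋
      rw [mul_one] at h
      show φ (x - ⌊x⌋) = φ x
      exact h
    have h1 : |φ (Int.fract x) - φ 0| ≤ K * |Int.fract x - 0| := hLip _ _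
    have h2 : |Int.fract x - 0| ≤ 1 := by
      rw [sub_zero, abs_of_nonneg (Int.fract_nonneg x)]
      exact le_of_lt (Int.fract_lt_one x)
    have h3 : |φ (Int.fract x)| ≤ |φ 0| + K * |Int.fract x - 0| := by
      calc |φ (Int.fract x)| ≤ |φ 0| + |φ (Int.fract x) - φ 0| := by
            have := abs_add_le (φ 0) (φ (Int.fract x) - φ 0)
            simpa using this
        _ ≤ |φ 0| + K * |Int.fract x - 0| := by linarith
    rw [hfr] at h3
    nlinarith
  -- extract two distinct points of the fiber
  obtain ⟨t₁, ht₁, t₂, ht₂, hlt⟩ : ∃ t₁ ∈ S, ∃ t₂ ∈ S, t₁ < t₂ := by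
    by_contra hcon
    push_neg at hcon
    rcases eq_empty_or_nonempty S with hemp | ⟨t₀, ht₀⟩
    · rw [hemp] at hlen
      simp [Real.sInf_empty, Real.sSup_empty] at hlen
    · have hsub : S = {t₀} := by
        apply Set.eq_singleton_iff_unique_mem.mpr
        refine ⟨ht₀, fun t ht => ?_⟩
        rcases lt_trichotomy t t₀ with h | h | h
        · exact absurd h (not_lt.mpr (le_of_eq (False.elim (absurd h (not_lt.mpr (hcon t ht t₀ ht₀))))))
        · exact h
        · exact absurd h (not_lt.mpr (hcon t₀ ht₀ t ht))
      rw [hsub] at hlen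
      simp at hlen
  -- set up the open box
  set δ : ℝ := (t₂ - t₁) / 4 with hδ
  have hδ0 : 0 < δ := by simp [hδ]; linarith
  set r : ℝ := δ / C with hr
  have hr0 : 0 < r := div_pos hδ0 hC0
  set tm : ℝ := (t₁ + t₂) / 2 with htm
  set U : Set (ℝ × ℝ) :=
    Ioo (tm - δ) (tm + δ) ×ˢ (Ioo (max (a₀ - r) (-(1 / K))) (min (a₀ + r) (1 / K))) with hU
  have hUopen : IsOpen U := isOpen_Ioo.prod isOpen_Ioo
  have hmemU : (tm, a₀) ∈ U := by
    constructor
    · constructor <;> simp <;> linarith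
    · constructor
      · simp only [max_lt_iff]
        exact ⟨by linarith, ha₀.1⟩
      · simp only [lt_min_iff]
        exact ⟨by linarith, ha₀.2⟩
  -- the key: translation numbers on the box
  have haK : ∀ a : ℝ, a ∈ Set.Ioo (-(1 / K)) (1 / K) → |a| * K ≤ 1 := by
    intro a ha
    have h1 : |a| < 1 / K := abs_lt.mpr ⟨ha.1, ha.2⟩
    calc |a| * K ≤ (1 / K) * K := by nlinarith [abs_nonneg a]
      _ = 1 := by field_simp
  have ha₀K := haK a₀ ha₀
  have hτ₁ : (myLift φ K t₁ a₀ hLip hper ha₀K).translationNumber = (p : ℝ) / q :=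
    myLift_transNum _ _ _ _ _ _ _ (ht₁ ▸ hτ t₁ a₀ ha₀)
  have hτ₂ : (myLift φ K t₂ a₀ hLip hper ha₀K).translationNumber = (p : ℝ) / q :=
    myLift_transNum _ _ _ _ _ _ _ (ht₂ ▸ hτ t₂ a₀ ha₀)
  have hUsub : U ⊆ {ta : ℝ × ℝ | ta.2 ∈ Set.Ioo (-(1 / K)) (1 / K) ∧
      τ ta.1 ta.2 = (p : ℝ) / (q : ℝ)} := by
    rintro ⟨t, a⟩ ⟨⟨htl, htr⟩, hal, har⟩
    have haJ : a ∈ Set.Ioo (-(1 / K)) (1 / K) :=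
      ⟨lt_of_le_of_lt (le_max_right _ _) hal, lt_of_lt_of_le har (min_le_right _ _)⟩
    have haaK := haK a haJ
    have hadist : |a - a₀| ≤ r := by
      have h1 : a₀ - r < a := lt_of_le_of_lt (le_max_left _ _) hal
      have h2 : a < a₀ + r := lt_of_lt_of_le har (min_le_left _ _)
      rw [abs_le]; constructor <;> linarith
    have habs : ∀ x : ℝ, |(a - a₀) * φ x| ≤ δ := by
      intro x
      have : |(a - a₀) * φ x| = |a - a₀| * |φ x| := abs_mul _ _
      rw [this]
      calc |a - a₀| * |φ x| ≤ r * C :=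
            mul_le_mul hadist (hφbdd x) (abs_nonneg _) (le_of_lt hr0)
        _ = δ := by rw [hr, div_mul_cancel₀ _ (ne_of_gt hC0)]
    -- squeeze
    have hle₁ : myLift φ K t₁ a₀ hLip hper ha₀K ≤ myLift φ K t a hLip hper haaK := by
      intro x
      show x + t₁ + a₀ * φ x ≤ x + t + a * φ x
      have h1 : (a - a₀) * φ x ≥ -δ := by
        have := habs x
        have := neg_abs_le ((a - a₀) * φ x)
        linarith
      have h2 : t - t₁ > δ := by
        simp only [htm, hδ] at htl ⊢
        linarith
      nlinarith
    have hle₂ : myLift φ K t a hLip hper haaK ≤ myLift φ K t₂ a₀ hLip hper ha₀K := by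
      intro x
      show x + t + a * φ x ≤ x + t₂ + a₀ * φ x
      have h1 : (a - a₀) * φ x ≤ δ := by
        have := habs x
        have := le_abs_self ((a - a₀) * φ x)
        linarith
      have h2 : t₂ - t > δ := by
        simp only [htm, hδ] at htr ⊢
        linarith
      nlinarith
    have hmono₁ := CircleDeg1Lift.translationNumber_mono hle₁
    have hmono₂ := CircleDeg1Lift.translationNumber_mono hle₂
    have hta : (myLift φ K t a hLip hper haaK).translationNumber = τ t a :=
      myLift_transNum _ _ _ _ _ _ _ (hτ t a haJ)
    refine ⟨haJ, ?_⟩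
    rw [← hta]
    rw [hτ₁] at hmono₁
    rw [hτ₂] at hmono₂
    linarith
  exact ⟨(tm, a₀), interior_maximal hUsub hUopen hmemU⟩
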